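/- For every operator monotone index function φ : [0,a] → ℝ⁺ there exists a constant 1 ≤ C < ∞ such that for all s, t with 0 < s ≤ t ≤ a it holds φ(t)/t ≤ C φ(s)/s. -/

import Mathlib

set_option synthInstance.maxHeartbeats 1000000
set_option maxHeartbeats 1000000
set_option linter.unusedSectionVars false
set_option linter.unusedVariables false
set_option linter.deprecated false

open scoped RealInnerProductSpace

noncomputable section

/-- `Φ` is the operator `φ(A)` given by the continuous functional calculus for a
(positive, self-adjoint) operator `A` with spectrum contained in `[0,a]`: `Φ` is a limit
of `q(A)` along polynomials `q` approximating `φ` uniformly on `[0,a]`. -/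
def IsFunctionalCalcOn (a : ℝ) (φ : ℝ → ℝ) {H : Type*} [NormedAddCommGroup H]
    [InnerProductSpace ℝ H] [CompleteSpace H] (A Φ : H →L[ℝ] H) : Prop :=
  ∀ ε : ℝ, 0 < ε → ∃ q : Polynomial ℝ,
    (∀ t ∈ Set.Icc (0 : ℝ) a, |φ t - q.eval t| ≤ ε) ∧ ‖Φ - Polynomial.aeval A q‖ ≤ ε

namespace OpMonoAux

variable {H : Type*} [NormedAddCommGroup H] [InnerProductSpace ℝ H] [CompleteSpace H]

/-- rank-one operator `x ↦ ⟪u,x⟫ • u`. -/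
def pr (u : H) : H →L[ℝ] H := (innerSL ℝ u).smulRight u

lemma pr_apply (u x : H) : pr u x = ⟪u, x⟫ • u := rfl

/-- `α • P + β • (1 - P)` where `P` is the rank-one projection onto `u`. -/
def opT (u : H) (α β : ℝ) : H →L[ℝ] H := α • pr u + β • (1 - pr u)

lemma opT_apply (u : H) (α β : ℝ) (x : H) :
    opT u α β x = α • (⟪u, x⟫ • u) + β • (x - ⟪u, x⟫ • u) := by
  simp [opT, pr_apply, ContinuousLinearMap.add_apply, ContinuousLinearMap.smul_apply,
    ContinuousLinearMap.sub_apply, ContinuousLinearMap.one_apply]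

variable {u : H}

lemma pr_mul (hu : ⟪u, u⟫ = 1) : pr u * pr u = pr u := by
  ext x
  simp [ContinuousLinearMap.mul_apply, pr_apply, real_inner_smul_right, hu, smul_smul,
    (by rw [← real_inner_self_eq_norm_sq, hu] : ‖u‖ ^ 2 = 1)]

lemma opT_mul (hu : ⟪u, u⟫ = 1) (γ δ α β : ℝ) :
    opT u γ δ * opT u α β = opT u (γ * α) (δ * β) := by
  have hP := pr_mul hu
  have h1 : pr u * (1 - pr u) = 0 := by rw [mul_sub, mul_one, hP, sub_self]
  have h2 : (1 - pr u) * pr u = 0 := by rw [sub_mul, one_mul, hP, sub_self]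
  have h3 : (1 - pr u) * (1 - pr u) = 1 - pr u := by rw [sub_mul, one_mul, h1, sub_zero]
  simp only [opT, add_mul, mul_add, smul_mul_assoc, mul_smul_comm, hP, h1, h2, h3,
    smul_zero, add_zero, zero_add, smul_smul, mul_comm γ α, mul_comm δ β]

lemma opT_add_coeffs (u : H) (α β α' β' : ℝ) :
    opT u (α + α') (β + β') = opT u α β + opT u α' β' := by
  simp only [opT, add_smul]; abel

lemma opT_aeval (hu : ⟪u, u⟫ = 1) (α β : ℝ) (q : Polynomial ℝ) :
    Polynomial.aeval (opT u α β) q = opT u (q.eval α) (q.eval β) := by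
  induction q using Polynomial.induction_on with
  | C c =>
      have hone : pr u + (1 - pr u) = 1 := by abel
      simp only [Polynomial.aeval_C, Polynomial.eval_C, Algebra.algebraMap_eq_smul_one, opT,
        ← smul_add, hone]
  | add p q hp hq =>
      simp only [map_add, Polynomial.eval_add, hp, hq, opT_add_coeffs]
  | monomial n c ih =>
      have hrw : (Polynomial.C c * Polynomial.X ^ (n + 1) : Polynomial ℝ)
          = Polynomial.C c * Polynomial.X ^ n * Polynomial.X := by ring
      rw [hrw, map_mul, ih, Polynomial.aeval_X, opT_mul hu]
      simp [Polynomial.eval_mul]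

lemma opT_inner_left (hu : ⟪u, u⟫ = 1) (α β : ℝ) (x y : H) :
    ⟪opT u α β x, y⟫ = α * (⟪u, x⟫ * ⟪u, y⟫) + β * (⟪x, y⟫ - ⟪u, x⟫ * ⟪u, y⟫) := by
  simp [opT_apply, inner_add_left, inner_sub_left, real_inner_smul_left]

lemma opT_inner (hu : ⟪u, u⟫ = 1) (α β : ℝ) (x : H) :
    ⟪opT u α β x, x⟫ = α * ⟪u, x⟫ ^ 2 + β * ‖x - ⟪u, x⟫ • u‖ ^ 2 := by
  have h := opT_inner_left hu α β x x
  have hw : ‖x - ⟪u, x⟫ • u‖ ^ 2 = ⟪x, x⟫ - ⟪u, x⟫ * ⟪u, x⟫ := by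
    rw [← real_inner_self_eq_norm_sq]
    simp only [inner_sub_left, inner_sub_right, real_inner_smul_left, real_inner_smul_right, hu,
      real_inner_comm x u]; ring
  rw [h, hw]; ring

lemma opT_norm_le (hu : ⟪u, u⟫ = 1) {α β m : ℝ} (hm : 0 ≤ m) (hα : |α| ≤ m) (hβ : |β| ≤ m) :
    ‖opT u α β‖ ≤ m := by
  refine ContinuousLinearMap.opNorm_le_bound _ hm fun x => ?_
  set p := ⟪u, x⟫ with hp
  set w := x - p • u with hwdef
  have huw : ⟪u, w⟫ = 0 := by
    simp [hwdef, inner_sub_right, real_inner_smul_right, hu, hp,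
      (by rw [← real_inner_self_eq_norm_sq, hu] : ‖u‖ ^ 2 = 1)]
  have hu1 : ‖u‖ ^ 2 = 1 := by rw [← real_inner_self_eq_norm_sq, hu]
  have hx : x = p • u + w := by rw [hwdef]; abel
  have hxn : ‖x‖ ^ 2 = p ^ 2 + ‖w‖ ^ 2 := by
    conv_lhs => rw [hx]
    rw [norm_add_sq_real, real_inner_smul_left, huw]
    simp [norm_smul, mul_pow, hu1, sq_abs]
  have hTx : ‖opT u α β x‖ ^ 2 = α ^ 2 * p ^ 2 + β ^ 2 * ‖w‖ ^ 2 := by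
    have happ : opT u α β x = (α * p) • u + β • w := by
      rw [opT_apply, ← hp, ← hwdef, smul_smul]
    rw [happ, norm_add_sq_real, real_inner_smul_left, real_inner_smul_right, huw]
    simp [norm_smul, mul_pow, hu1, sq_abs]
    try ring
  have hα2 : α ^ 2 ≤ m ^ 2 := by rw [← sq_abs α]; exact pow_le_pow_left₀ (abs_nonneg α) hα 2
  have hβ2 : β ^ 2 ≤ m ^ 2 := by rw [← sq_abs β]; exact pow_le_pow_left₀ (abs_nonneg β) hβ 2
  have h2 : ‖opT u α β x‖ ^ 2 ≤ (m * ‖x‖) ^ 2 := by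
    rw [hTx]
    have : (m * ‖x‖) ^ 2 = m ^ 2 * (p ^ 2 + ‖w‖ ^ 2) := by rw [mul_pow, hxn]
    rw [this]
    nlinarith [sq_nonneg p, sq_nonneg ‖w‖]
  exact le_of_pow_le_pow_left₀ two_ne_zero (mul_nonneg hm (norm_nonneg x)) h2

lemma opT_isPositive (hu : ⟪u, u⟫ = 1) {α β : ℝ} (hα : 0 ≤ α) (hβ : 0 ≤ β) :
    (opT u α β).IsPositive := by
  constructor
  · intro x y
    have h1 := opT_inner_left hu α β x y
    have h2 := opT_inner_left hu α β y x
    have : ⟪x, (opT u α β) y⟫ = ⟪(opT u α β) y, x⟫ := real_inner_comm _ _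
    simp only [ContinuousLinearMap.coe_coe]
    rw [h1, this, h2, real_inner_comm x y]
    ring
  · intro x
    rw [ContinuousLinearMap.reApplyInnerSelf_apply]
    have : RCLike.re (⟪opT u α β x, x⟫ : ℝ) = ⟪opT u α β x, x⟫ := rfl
    rw [this, opT_inner hu]
    have := sq_nonneg (⟪u, x⟫ : ℝ)
    have := sq_nonneg ‖x - (⟪u, x⟫ : ℝ) • u‖
    nlinarith

lemma opT_funcalc (a : ℝ) (φ : ℝ → ℝ) (hφ : ContinuousOn φ (Set.Icc 0 a))
    (hu : ⟪u, u⟫ = 1) {α β : ℝ} (hα : α ∈ Set.Icc 0 a) (hβ : β ∈ Set.Icc 0 a) :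
    IsFunctionalCalcOn a φ (opT u α β) (opT u (φ α) (φ β)) := by
  intro ε hε
  obtain ⟨q, hq⟩ := exists_polynomial_near_of_continuousOn 0 a φ hφ ε hε
  refine ⟨q, fun r hr => ?_, ?_⟩
  · rw [abs_sub_comm]; exact (hq r hr).le
  · rw [opT_aeval hu]
    have hsub : opT u (φ α) (φ β) - opT u (q.eval α) (q.eval β)
        = opT u (φ α - q.eval α) (φ β - q.eval β) := by
      simp only [opT, sub_smul]; abel
    rw [hsub]
    refine opT_norm_le hu hε.le ?_ ?_
    · rw [abs_sub_comm]; exact (hq α hα).le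
    · rw [abs_sub_comm]; exact (hq β hβ).le

/-- scalar Cauchy–Schwarz step -/
lemma cs_aux {s b t γ δ x0 x1 : ℝ} (hs : 0 < s) (hb : 0 < b) (ht : 0 ≤ t)
    (h : t * γ ^ 2 * b + t * δ ^ 2 * s ≤ s * b) :
    t * (γ * x0 + δ * x1) ^ 2 ≤ s * x0 ^ 2 + b * x1 ^ 2 := by
  nlinarith [sq_nonneg (γ * b * x1 - δ * s * x0), mul_nonneg ht (sq_nonneg (γ * x0 + δ * x1)),
    mul_pos hs hb, sq_nonneg x0, sq_nonneg x1,
    mul_nonneg (mul_nonneg hs.le (sq_nonneg x0)) (sub_nonneg.mpr h),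
    mul_nonneg (mul_nonneg hb.le (sq_nonneg x1)) (sub_nonneg.mpr h)]

/-- The key inequality extracted from operator monotonicity on 2×2 operators:
for `0 < s ≤ t < b ≤ a`, `φ(t)·s·(b−t) ≤ φ(s)·t·(b−s)`. -/
lemma key_ineq (a : ℝ) (ha : 0 < a) (φ : ℝ → ℝ)
    (hφcont : ContinuousOn φ (Set.Icc 0 a)) (hφ0 : φ 0 = 0)
    (hopmono : ∀ (H : Type) [NormedAddCommGroup H] [InnerProductSpace ℝ H]
      [CompleteSpace H] (A B ΦA ΦB : H →L[ℝ] H),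
      A.IsPositive → B.IsPositive → ‖A‖ ≤ a → ‖B‖ ≤ a →
      IsFunctionalCalcOn a φ A ΦA → IsFunctionalCalcOn a φ B ΦB →
      (∀ x, ⟪A x, x⟫ ≤ ⟪B x, x⟫) → ∀ x, ⟪ΦA x, x⟫ ≤ ⟪ΦB x, x⟫)
    {s t b : ℝ} (hs : 0 < s) (hst : s ≤ t) (htb : t < b) (hba : b ≤ a) :
    φ t * (s * (b - t)) ≤ φ s * (t * (b - s)) := by
  have ht : 0 < t := lt_of_lt_of_le hs hst
  have hb : 0 < b := lt_trans ht htb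
  have hbt : 0 < b - t := by linarith
  have hbs : 0 < b - s := by linarith
  have hts : 0 < t * (b - s) := mul_pos ht hbs
  set c2 : ℝ := s * (b - t) / (t * (b - s)) with hc2def
  have hc2nn : 0 ≤ c2 := by positivity
  have hc2le : c2 ≤ 1 := by
    rw [div_le_one hts]; nlinarith
  set c : ℝ := Real.sqrt c2 with hcdef
  set d : ℝ := Real.sqrt (1 - c2) with hddef
  have hc : c ^ 2 = c2 := Real.sq_sqrt hc2nn
  have hd : d ^ 2 = 1 - c2 := Real.sq_sqrt (by linarith)
  set u : EuclideanSpace ℝ (Fin 2) := (WithLp.equiv 2 (Fin 2 → ℝ)).symm ![c, d] with hudef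
  set v : EuclideanSpace ℝ (Fin 2) := (WithLp.equiv 2 (Fin 2 → ℝ)).symm ![1, 0] with hvdef
  have hux : ∀ x : EuclideanSpace ℝ (Fin 2), ⟪u, x⟫ = c * x 0 + d * x 1 := by
    intro x
    simp [hudef, PiLp.inner_apply, Fin.sum_univ_two, WithLp.equiv_symm_apply, PiLp.toLp_apply]; ring
  have hvx : ∀ x : EuclideanSpace ℝ (Fin 2), ⟪v, x⟫ = x 0 := by
    intro x
    simp [hvdef, PiLp.inner_apply, Fin.sum_univ_two, WithLp.equiv_symm_apply, PiLp.toLp_apply]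
  have huu : ⟪u, u⟫ = 1 := by
    rw [hux]
    have h0 : (u 0 : ℝ) = c := by simp [hudef, WithLp.equiv_symm_apply, PiLp.toLp_apply]
    have h1 : (u 1 : ℝ) = d := by simp [hudef, WithLp.equiv_symm_apply, PiLp.toLp_apply]
    rw [h0, h1]; nlinarith [hc, hd]
  have hvv : ⟪v, v⟫ = 1 := by
    rw [hvx]; simp [hvdef, WithLp.equiv_symm_apply, PiLp.toLp_apply]
  have hv0 : (v 0 : ℝ) = 1 := by simp [hvdef, WithLp.equiv_symm_apply, PiLp.toLp_apply]
  have hv1 : (v 1 : ℝ) = 0 := by simp [hvdef, WithLp.equiv_symm_apply, PiLp.toLp_apply]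
  -- norm squared of orthogonal part for B
  have hwnorm : ∀ x : EuclideanSpace ℝ (Fin 2),
      ‖x - (⟪v, x⟫ : ℝ) • v‖ ^ 2 = (x 1) ^ 2 := by
    intro x
    rw [← real_inner_self_eq_norm_sq, hvx]
    have e0 : (x - (x 0 : ℝ) • v) 0 = 0 := by
      simp [hvdef, WithLp.equiv_symm_apply, PiLp.toLp_apply]
    have e1 : (x - (x 0 : ℝ) • v) 1 = x 1 := by
      simp [hvdef, WithLp.equiv_symm_apply, PiLp.toLp_apply]
    rw [PiLp.inner_apply, Fin.sum_univ_two, e0, e1]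
    simp [sq]
  -- the operators
  have hcs : t * c ^ 2 * b + t * d ^ 2 * s ≤ s * b := by
    rw [hc, hd, hc2def]
    have : t * (s * (b - t) / (t * (b - s))) * b + t * (1 - s * (b - t) / (t * (b - s))) * s
        = s * b := by
      field_simp
      ring
    linarith [this.le]
  have hABx : ∀ x : EuclideanSpace ℝ (Fin 2), ⟪opT u t 0 x, x⟫ ≤ ⟪opT v s b x, x⟫ := by
    intro x
    rw [opT_inner huu, opT_inner hvv, hwnorm x, hux, hvx]
    have := cs_aux (γ := c) (δ := d) (x0 := x 0) (x1 := x 1) hs hb ht.le hcs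
    nlinarith [this]
  have htIcc : t ∈ Set.Icc (0:ℝ) a := ⟨ht.le, by linarith⟩
  have hsIcc : s ∈ Set.Icc (0:ℝ) a := ⟨hs.le, by linarith⟩
  have hbIcc : b ∈ Set.Icc (0:ℝ) a := ⟨hb.le, hba⟩
  have h0Icc : (0:ℝ) ∈ Set.Icc (0:ℝ) a := ⟨le_rfl, ha.le⟩
  have main := hopmono (EuclideanSpace ℝ (Fin 2))
    (opT u t 0) (opT v s b) (opT u (φ t) (φ 0)) (opT v (φ s) (φ b))
    (opT_isPositive huu ht.le le_rfl)
    (opT_isPositive hvv hs.le hb.le)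
    (opT_norm_le huu ha.le (by rw [abs_of_nonneg ht.le]; linarith) (by simp [ha.le]))
    (opT_norm_le hvv ha.le (by rw [abs_of_nonneg hs.le]; linarith)
      (by rw [abs_of_nonneg hb.le]; exact hba))
    (opT_funcalc a φ hφcont huu htIcc h0Icc)
    (opT_funcalc a φ hφcont hvv hsIcc hbIcc)
    hABx v
  rw [opT_inner huu, opT_inner hvv, hux, hvx, hv0, hv1] at main
  have huv : c * 1 + d * 0 = c := by ring
  rw [huv] at main
  have hvsub : ‖v - (1:ℝ) • v‖ ^ 2 = 0 := by simp
  rw [hvsub, hφ0] at main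
  -- main : φ t * c ^ 2 + 0 * ‖v - c • u‖^2 ≤ φ s * 1 ^ 2 + φ b * 0
  have main2 : φ t * c2 ≤ φ s := by
    rw [← hc]; nlinarith [main]
  have := mul_le_mul_of_nonneg_right main2 hts.le
  rw [hc2def] at this
  calc φ t * (s * (b - t)) = φ t * (s * (b - t) / (t * (b - s))) * (t * (b - s)) := by
        field_simp
    _ ≤ φ s * (t * (b - s)) := this

end OpMonoAux

/-- **Lemma 2.11 (Mathé–Pereverzyev).**  For each operator monotone index function
`φ : [0,a] → ℝ⁺` there is a constant `1 ≤ C < ∞` such that whenever `0 < s ≤ t ≤ a` we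
have `φ(t)/t ≤ C φ(s)/s`. -/
theorem operator_monotone_index_function_bound
    (a : ℝ) (ha : 0 < a) (φ : ℝ → ℝ)
    -- `φ` is an index function on `[0,a]` with values in `ℝ⁺`
    (hφcont : ContinuousOn φ (Set.Icc 0 a))
    (hφmono : MonotoneOn φ (Set.Icc 0 a))
    (hφ0 : φ 0 = 0)
    (hφnn : ∀ t ∈ Set.Icc (0 : ℝ) a, 0 ≤ φ t)
    -- `φ` is operator monotone: for any Hilbert space `H` and bounded non-negative
    -- self-adjoint operators `A ≼ B` of norm `≤ a`, one has `φ(A) ≼ φ(B)`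
    (hopmono : ∀ (H : Type) [NormedAddCommGroup H] [InnerProductSpace ℝ H]
      [CompleteSpace H] (A B ΦA ΦB : H →L[ℝ] H),
      A.IsPositive → B.IsPositive → ‖A‖ ≤ a → ‖B‖ ≤ a →
      IsFunctionalCalcOn a φ A ΦA → IsFunctionalCalcOn a φ B ΦB →
      (∀ x, ⟪A x, x⟫ ≤ ⟪B x, x⟫) → ∀ x, ⟪ΦA x, x⟫ ≤ ⟪ΦB x, x⟫) :
    ∃ C : ℝ, 1 ≤ C ∧ ∀ s t : ℝ, 0 < s → s ≤ t → t ≤ a → φ t / t ≤ C * (φ s / s) := by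
  have key := fun {s t b : ℝ} (hs : 0 < s) (hst : s ≤ t) (htb : t < b) (hba : b ≤ a) =>
    OpMonoAux.key_ineq a ha φ hφcont hφ0 hopmono hs hst htb hba
  have ha2 : (0:ℝ) < a / 2 := by linarith
  have ha2Icc : a / 2 ∈ Set.Icc (0:ℝ) a := ⟨by linarith, by linarith⟩
  have haIcc : a ∈ Set.Icc (0:ℝ) a := ⟨ha.le, le_rfl⟩
  by_cases hφa : φ a ≤ 0
  · -- φ vanishes identically
    have hφa0 : φ a = 0 := le_antisymm hφa (hφnn a haIcc)
    refine ⟨1, le_rfl, fun s t hs hst hta => ?_⟩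
    have ht : 0 < t := lt_of_lt_of_le hs hst
    have htIcc : t ∈ Set.Icc (0:ℝ) a := ⟨ht.le, hta⟩
    have hsIcc : s ∈ Set.Icc (0:ℝ) a := ⟨hs.le, hst.trans hta⟩
    have hφt : φ t = 0 := le_antisymm (hφa0 ▸ hφmono htIcc haIcc hta) (hφnn t htIcc)
    have hφs : φ s = 0 := le_antisymm (hφa0 ▸ hφmono hsIcc haIcc (hst.trans hta)) (hφnn s hsIcc)
    simp [hφt, hφs]
  · push_neg at hφa
    -- φ (a/2) > 0
    have hφa2 : 0 < φ (a / 2) := by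
      by_contra hcon
      have h0 : φ (a / 2) = 0 := le_antisymm (not_lt.mp hcon) (hφnn _ ha2Icc)
      -- by continuity at a, find t₀ ∈ (a/2, a) with φ t₀ > 0
      have hc := hφcont a haIcc
      rw [Metric.continuousWithinAt_iff] at hc
      obtain ⟨δ, hδ, hδ'⟩ := hc (φ a) hφa
      set t0 : ℝ := a - min (δ / 2) (a / 4) with ht0def
      have hmin : 0 < min (δ / 2) (a / 4) := lt_min (by linarith) (by linarith)
      have hminle : min (δ / 2) (a / 4) ≤ a / 4 := min_le_right _ _
      have ht0a : t0 < a := by simp only [ht0def]; linarith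
      have ht0half : a / 2 < t0 := by simp only [ht0def]; linarith
      have ht0nn : 0 ≤ t0 := by simp only [ht0def]; linarith
      have ht0Icc : t0 ∈ Set.Icc (0:ℝ) a := ⟨ht0nn, ht0a.le⟩
      have hdist : dist t0 a < δ := by
        rw [Real.dist_eq, ht0def]
        rw [abs_of_nonpos (by linarith)]
        have : min (δ / 2) (a / 4) ≤ δ / 2 := min_le_left _ _
        linarith
      have hclose := hδ' ht0Icc hdist
      rw [Real.dist_eq] at hclose
      have hφt0 : 0 < φ t0 := by
        rcases abs_lt.mp hclose with ⟨h1, h2⟩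
        linarith
      have hk := key ha2 ht0half.le ht0a le_rfl
      rw [h0] at hk
      nlinarith [hφt0, mul_pos (mul_pos ha2 ha2) (show (0:ℝ) < a - t0 by linarith)]
    set C : ℝ := 2 * φ a / φ (a / 2) with hCdef
    have hφa2a : φ (a / 2) ≤ φ a := hφmono ha2Icc haIcc (by linarith)
    have hC1 : 1 ≤ C := by
      rw [hCdef, le_div_iff₀ hφa2]; linarith
    have hC2 : 2 ≤ C := by
      rw [hCdef, le_div_iff₀ hφa2]; linarith
    refine ⟨C, hC1, fun s t hs hst hta => ?_⟩
    have ht : 0 < t := lt_of_lt_of_le hs hst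
    have hsa : s ≤ a := hst.trans hta
    have htIcc : t ∈ Set.Icc (0:ℝ) a := ⟨ht.le, hta⟩
    have hsIcc : s ∈ Set.Icc (0:ℝ) a := ⟨hs.le, hsa⟩
    have hφs : 0 ≤ φ s := hφnn s hsIcc
    have hφt : 0 ≤ φ t := hφnn t htIcc
    have hφsss : 0 ≤ φ s / s := div_nonneg hφs hs.le
    by_cases htha : t ≤ a / 2
    · -- use the key inequality directly, C ≥ 2 suffices
      have hta' : t < a := by linarith
      have hk := key hs hst hta' le_rfl
      have h2 : φ t * s ≤ 2 * (φ s * t) := by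
        nlinarith [mul_nonneg (mul_nonneg hφs ht.le) (show (0:ℝ) ≤ a - 2 * t + s by linarith),
          show (0:ℝ) < a - t by linarith]
      have hdiv : φ t / t ≤ 2 * φ s / s := by
        rw [div_le_div_iff₀ ht hs]; nlinarith [h2]
      calc φ t / t ≤ 2 * φ s / s := hdiv
        _ = 2 * (φ s / s) := by ring
        _ ≤ C * (φ s / s) := mul_le_mul_of_nonneg_right hC2 hφsss
    · push_neg at htha
      -- lower bound for φ s / s
      have hlow : φ (a / 2) / a ≤ φ s / s := by
        rw [div_le_div_iff₀ ha hs]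
        by_cases hs2 : s ≤ a / 2
        · rcases eq_or_lt_of_le hs2 with heq | hlt
          · rw [heq]; nlinarith [hφnn _ ha2Icc]
          · have hk := key hs hs2 (show a / 2 < a by linarith) le_rfl
            nlinarith [mul_nonneg hφs (show (0:ℝ) ≤ s by linarith)]
        · push_neg at hs2
          have : φ (a / 2) ≤ φ s := hφmono ha2Icc hsIcc hs2.le
          nlinarith [hφnn _ ha2Icc]
      have hup : φ t / t ≤ 2 * φ a / a := by
        rw [div_le_div_iff₀ ht ha]
        have : φ t ≤ φ a := hφmono htIcc haIcc hta
        nlinarith [hφa.le]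
      have heq : C * (φ (a / 2) / a) = 2 * φ a / a := by
        rw [hCdef]; field_simp
      calc φ t / t ≤ 2 * φ a / a := hup
        _ = C * (φ (a / 2) / a) := heq.symm
        _ ≤ C * (φ s / s) := mul_le_mul_of_nonneg_left hlow (by linarith)
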